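/- Kernel ball estimate: let K : εℤ^N → ℝ satisfy K_j = K_{−j} ≥ 0, Σ_j K_j = 1, and set h := (1/(2N)) Σ_j |j|² K_j. Then for any R > 0 and any i ∈ εℤ^N with |i| ≥ 3R/4, the discrete convolution satisfies (K * |·|)_i := Σ_{j ∈ εℤ^N} K_j |i − j| ≤ |i| + 8N h / R. -/

import Mathlib

noncomputable section

def pt (N : ℕ) (ε : ℝ) (i : Fin N → ℤ) : EuclideanSpace ℝ (Fin N) :=
  (WithLp.equiv 2 (Fin N → ℝ)).symm fun n => ε * (i n)

lemma pt_neg (N : ℕ) (ε : ℝ) (j : Fin N → ℤ) : pt N ε (-j) = - pt N ε j := by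
  ext n
  simp [pt, WithLp.equiv_symm_apply, PiLp.toLp_apply, PiLp.neg_apply]

lemma half_bound {V : Type*} [NormedAddCommGroup V] [InnerProductSpace ℝ V]
    (v w : V) (hv : 0 < ‖v‖) :
    ‖v - w‖ + ‖v + w‖ ≤ 2 * ‖v‖ + ‖w‖ ^ 2 / ‖v‖ := by
  have hpar := parallelogram_law_with_norm ℝ v w
  have ha : 0 ≤ ‖v - w‖ := norm_nonneg _
  have hb : 0 ≤ ‖v + w‖ := norm_nonneg _
  have hw : 0 ≤ ‖w‖ := norm_nonneg _
  have key : ‖v - w‖ + ‖v + w‖ ≤ 2 * Real.sqrt (‖v‖ ^ 2 + ‖w‖ ^ 2) := by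
    have h1 : (‖v - w‖ + ‖v + w‖) ^ 2 ≤ (2 * Real.sqrt (‖v‖ ^ 2 + ‖w‖ ^ 2)) ^ 2 := by
      have hs : Real.sqrt (‖v‖ ^ 2 + ‖w‖ ^ 2) ^ 2 = ‖v‖ ^ 2 + ‖w‖ ^ 2 := by
        apply Real.sq_sqrt; positivity
      nlinarith [sq_nonneg (‖v - w‖ - ‖v + w‖)]
    exact le_of_pow_le_pow_left₀ (by norm_num) (by positivity) h1
  have key2 : Real.sqrt (‖v‖ ^ 2 + ‖w‖ ^ 2) ≤ ‖v‖ + ‖w‖ ^ 2 / (2 * ‖v‖) := by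
    rw [show ‖v‖ ^ 2 + ‖w‖ ^ 2 = (‖v‖ + ‖w‖ ^ 2 / (2 * ‖v‖)) ^ 2 - (‖w‖ ^ 2 / (2 * ‖v‖)) ^ 2 by
      field_simp; ring]
    calc Real.sqrt ((‖v‖ + ‖w‖ ^ 2 / (2 * ‖v‖)) ^ 2 - (‖w‖ ^ 2 / (2 * ‖v‖)) ^ 2)
        ≤ Real.sqrt ((‖v‖ + ‖w‖ ^ 2 / (2 * ‖v‖)) ^ 2) := by
          apply Real.sqrt_le_sqrt; nlinarith [sq_nonneg (‖w‖ ^ 2 / (2 * ‖v‖))]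
      _ = ‖v‖ + ‖w‖ ^ 2 / (2 * ‖v‖) := by
          rw [Real.sqrt_sq (by positivity)]
  calc ‖v - w‖ + ‖v + w‖ ≤ 2 * Real.sqrt (‖v‖ ^ 2 + ‖w‖ ^ 2) := key
    _ ≤ 2 * (‖v‖ + ‖w‖ ^ 2 / (2 * ‖v‖)) := by linarith
    _ = 2 * ‖v‖ + ‖w‖ ^ 2 / ‖v‖ := by field_simp

theorem stmt8 (N : ℕ) (hN : 1 ≤ N) (ε : ℝ) (hε : 0 < ε)
    (K : (Fin N → ℤ) → ℝ)
    (hsym : ∀ j, K (-j) = K j) (hpos : ∀ j, 0 ≤ K j)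
    (hsum : Summable K) (hmass : ∑' j, K j = 1)
    (hmom : Summable fun j => ‖pt N ε j‖ ^ 2 * K j)
    (h : ℝ) (hh : h = (1 / (2 * N)) * ∑' j, ‖pt N ε j‖ ^ 2 * K j)
    (R : ℝ) (hR : 0 < R) (i : Fin N → ℤ) (hi : 3 * R / 4 ≤ ‖pt N ε i‖)
    (hconv : Summable fun j => K j * ‖pt N ε i - pt N ε j‖) :
    ∑' j, K j * ‖pt N ε i - pt N ε j‖ ≤ ‖pt N ε i‖ + 8 * N * h / R := by
  set v := pt N ε i with hv
  set M := ∑' j, ‖pt N ε j‖ ^ 2 * K j with hM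
  have hv0 : 0 < ‖v‖ := lt_of_lt_of_le (by linarith) hi
  have hM0 : 0 ≤ M := tsum_nonneg fun j => mul_nonneg (by positivity) (hpos j)
  set f : (Fin N → ℤ) → ℝ := fun j => K j * ‖v - pt N ε j‖ with hf
  set g : (Fin N → ℤ) → ℝ := fun j => K j * ‖v + pt N ε j‖ with hg
  have hfg : ∀ j, f (-j) = g j := by
    intro j
    simp only [hf, hg, hsym, pt_neg, sub_neg_eq_add]
  have hgsum : Summable g := by
    have := hconv.comp_injective (neg_injective : Function.Injective (Neg.neg : (Fin N → ℤ) → _))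
    exact this.congr hfg
  have htsum_eq : ∑' j, g j = ∑' j, f j := by
    have := (Equiv.neg (Fin N → ℤ)).tsum_eq f
    simp only [Equiv.neg_apply] at this
    rw [← this]
    exact tsum_congr fun j => (hfg j).symm
  -- upper function
  set u : (Fin N → ℤ) → ℝ := fun j => K j * (2 * ‖v‖) + ‖pt N ε j‖ ^ 2 * K j * (1 / ‖v‖)
    with hu
  have husum : Summable u := (hsum.mul_right _).add (hmom.mul_right _)
  have hptle : ∀ j, f j + g j ≤ u j := by
    intro j
    have hb := half_bound v (pt N ε j) hv0
    have := mul_le_mul_of_nonneg_left hb (hpos j)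
    simp only [hf, hg, hu]
    calc K j * ‖v - pt N ε j‖ + K j * ‖v + pt N ε j‖
        = K j * (‖v - pt N ε j‖ + ‖v + pt N ε j‖) := by ring
      _ ≤ K j * (2 * ‖v‖ + ‖pt N ε j‖ ^ 2 / ‖v‖) := this
      _ = K j * (2 * ‖v‖) + ‖pt N ε j‖ ^ 2 * K j * (1 / ‖v‖) := by ring
  have hsum2 : ∑' j, f j + ∑' j, g j ≤ ∑' j, u j := by
    rw [← Summable.tsum_add hconv hgsum]
    exact Summable.tsum_le_tsum hptle (hconv.add hgsum) husum
  have hutsum : ∑' j, u j = 2 * ‖v‖ + M * (1 / ‖v‖) := by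
    rw [Summable.tsum_add (hsum.mul_right _) (hmom.mul_right _), tsum_mul_right, tsum_mul_right,
      hmass, ← hM]
    ring
  have hmain : ∑' j, f j ≤ ‖v‖ + M / (2 * ‖v‖) := by
    rw [htsum_eq] at hsum2
    rw [hutsum] at hsum2
    have h2 : 2 * ∑' j, f j ≤ 2 * ‖v‖ + M / ‖v‖ := by
      rw [mul_one_div] at hsum2; linarith
    have h3 : M / ‖v‖ = 2 * (M / (2 * ‖v‖)) := by field_simp
    linarith
  have hNpos : (0:ℝ) < N := by exact_mod_cast Nat.lt_of_lt_of_le Nat.zero_lt_one hN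
  have hMh : M = 2 * N * h := by
    rw [hh]; field_simp
  refine hmain.trans ?_
  rw [hMh]
  have hh0 : 0 ≤ h := by
    rw [hh]; positivity
  have : 2 * (N:ℝ) * h / (2 * ‖v‖) = N * h / ‖v‖ := by
    field_simp
  rw [this]
  have hle : (N:ℝ) * h / ‖v‖ ≤ N * h / (3 * R / 4) := by
    apply div_le_div_of_nonneg_left (by positivity) (by linarith) hi
  have : (N:ℝ) * h / (3 * R / 4) ≤ 8 * N * h / R := by
    rw [div_le_div_iff₀ (by linarith) hR]
    nlinarith
  linarith
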